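/- Let (h_n) be a regular sequence of functions on [0,1] and let h : [0,1] → ℝ be continuous and satisfy ∑_{n=0}^∞ ∫₀¹ h_n < ∫₀¹ h (the series on the left converges since ∫₀¹ h_n < 2^{-n}). Then there exists a point ξ ∈ [0,1] such that the series ∑_{n=0}^∞ h_n(ξ) converges and its sum is strictly less than h(ξ). -/
import Mathlib


open MeasureTheory Filter Set

noncomputable section

/-- A sequence of functions on `[0,1]` is *regular* if each member is continuous and
nonnegative on `[0,1]` and has integral over `[0,1]` strictly less than `2⁻ⁿ`. -/
def RegularSeq (h : ℕ → ℝ → ℝ) : Prop :=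
  ∀ n : ℕ, ContinuousOn (h n) (Set.Icc 0 1) ∧
    (∀ x ∈ Set.Icc (0:ℝ) 1, 0 ≤ h n x) ∧
    (∫ x in (0:ℝ)..1, h n x) < (1/2 : ℝ) ^ n

/-- The set `Ω(𝔥)` of points of `[0,1]` at which the partial sums of `∑ hₙ(x)` are
bounded above. -/
def Omega (h : ℕ → ℝ → ℝ) : Set ℝ :=
  {x ∈ Set.Icc (0:ℝ) 1 | ∃ γ : ℝ, ∀ m : ℕ, ∑ n ∈ Finset.range (m+1), h n x ≤ γ}

/-- A subset `X ⊆ [0,1]` is *almost full* if `Ω(𝔥) ⊆ X` for some regular sequence `𝔥`. -/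
def AlmostFull (X : Set ℝ) : Prop :=
  ∃ h : ℕ → ℝ → ℝ, RegularSeq h ∧ Omega h ⊆ X

/-- If `(hₙ)` is regular, `h` is continuous on `[0,1]`, and `∑ₙ ∫₀¹ hₙ < ∫₀¹ h`, then at
some point `ξ ∈ [0,1]` the series `∑ₙ hₙ(ξ)` converges to a sum strictly less than `h(ξ)`. -/
theorem stmt0 (hseq : ℕ → ℝ → ℝ) (hreg : RegularSeq hseq)
    (h : ℝ → ℝ) (hcont : ContinuousOn h (Set.Icc 0 1))
    (hlt : (∑' n : ℕ, ∫ x in (0:ℝ)..1, hseq n x) < ∫ x in (0:ℝ)..1, h x) :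
    ∃ ξ ∈ Set.Icc (0:ℝ) 1,
      Summable (fun n => hseq n ξ) ∧ (∑' n : ℕ, hseq n ξ) < h ξ := by
  by_contra hcon
  push_neg at hcon
  set μ : Measure ℝ := volume.restrict (Set.Icc (0:ℝ) 1) with hμ
  set a : ℕ → ℝ := fun n => ∫ x in (0:ℝ)..1, hseq n x with ha
  have ha_nonneg : ∀ n, 0 ≤ a n := fun n =>
    intervalIntegral.integral_nonneg zero_le_one (fun x hx => (hreg n).2.1 x hx)
  have ha_sum : Summable a :=
    Summable.of_nonneg_of_le ha_nonneg (fun n => (hreg n).2.2.le)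
      (summable_geometric_of_lt_one (by norm_num) (by norm_num))
  have hS_nonneg : 0 ≤ ∑' n, a n := tsum_nonneg ha_nonneg
  have hInt : ∀ n, Integrable (hseq n) μ := fun n => (hreg n).1.integrableOn_Icc
  have hIntμ : ∀ n, (∫ x, hseq n x ∂μ) = a n := by
    intro n
    show (∫ x, hseq n x ∂μ) = ∫ x in (0:ℝ)..1, hseq n x
    rw [intervalIntegral.integral_of_le zero_le_one, hμ]
    exact MeasureTheory.integral_Icc_eq_integral_Ioc
  have hAE : ∀ n, AEMeasurable (hseq n) μ := fun n =>
    (hreg n).1.aemeasurable measurableSet_Icc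
  have hnn : ∀ n, 0 ≤ᵐ[μ] hseq n := fun n =>
    (ae_restrict_iff' measurableSet_Icc).2 (ae_of_all _ fun x hx => (hreg n).2.1 x hx)
  -- each lintegral equals ofReal of the interval integral
  have hlin : ∀ n, (∫⁻ x, ENNReal.ofReal (hseq n x) ∂μ) = ENNReal.ofReal (a n) := by
    intro n
    rw [← ofReal_integral_eq_lintegral_ofReal (hInt n) (hnn n), hIntμ n]
  -- pointwise bound from the contradiction hypothesis
  have hpt : ∀ x ∈ Set.Icc (0:ℝ) 1,
      ENNReal.ofReal (h x) ≤ ∑' n, ENNReal.ofReal (hseq n x) := by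
    intro x hx
    by_cases hsum : Summable (fun n => hseq n x)
    · have := hcon x hx hsum
      rw [← ENNReal.ofReal_tsum_of_nonneg (fun n => (hreg n).2.1 x hx) hsum]
      exact ENNReal.ofReal_le_ofReal this
    · -- the ENNReal sum is infinite
      have : (∑' n, ENNReal.ofReal (hseq n x)) = ⊤ := by
        by_contra htop
        have hs := ENNReal.summable_toReal htop
        apply hsum
        refine hs.congr fun n => ?_
        exact ENNReal.toReal_ofReal ((hreg n).2.1 x hx)
      simp [this]
  have hptae : ∀ᵐ x ∂μ, ENNReal.ofReal (h x) ≤ ∑' n, ENNReal.ofReal (hseq n x) :=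
    (ae_restrict_iff' measurableSet_Icc).2 (ae_of_all _ hpt)
  -- the chain of inequalities
  have h1 : (∫⁻ x, ENNReal.ofReal (h x) ∂μ) ≤ ∫⁻ x, ∑' n, ENNReal.ofReal (hseq n x) ∂μ :=
    lintegral_mono_ae hptae
  have h2 : (∫⁻ x, ∑' n, ENNReal.ofReal (hseq n x) ∂μ) = ENNReal.ofReal (∑' n, a n) := by
    rw [lintegral_tsum fun n => (hAE n).ennreal_ofReal]
    rw [ENNReal.ofReal_tsum_of_nonneg ha_nonneg ha_sum]
    exact tsum_congr hlin
  -- lower bound for the lintegral of ofReal h by ofReal of the integral of h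
  have hIntH : Integrable h μ := hcont.integrableOn_Icc
  have hIntHp : Integrable (fun x => max (h x) 0) μ := hIntH.pos_part
  have h3 : ENNReal.ofReal (∫ x, h x ∂μ) ≤ ∫⁻ x, ENNReal.ofReal (h x) ∂μ := by
    have hmono : (∫ x, h x ∂μ) ≤ ∫ x, max (h x) 0 ∂μ :=
      integral_mono hIntH hIntHp fun x => le_max_left _ _
    calc ENNReal.ofReal (∫ x, h x ∂μ) ≤ ENNReal.ofReal (∫ x, max (h x) 0 ∂μ) :=
          ENNReal.ofReal_le_ofReal hmono
      _ = ∫⁻ x, ENNReal.ofReal (max (h x) 0) ∂μ :=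
          ofReal_integral_eq_lintegral_ofReal hIntHp
            (ae_of_all _ fun x => le_max_right _ _)
      _ = ∫⁻ x, ENNReal.ofReal (h x) ∂μ := lintegral_congr fun x => by
          unfold ENNReal.ofReal
          congr 1
          exact NNReal.coe_injective (by simp [Real.coe_toNNReal', max_assoc])
  have hIH : (∫ x, h x ∂μ) = ∫ x in (0:ℝ)..1, h x := by
    rw [intervalIntegral.integral_of_le zero_le_one, hμ]
    exact MeasureTheory.integral_Icc_eq_integral_Ioc
  have hfinal : ENNReal.ofReal (∫ x in (0:ℝ)..1, h x) ≤ ENNReal.ofReal (∑' n, a n) := by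
    rw [← hIH, ← h2]
    exact h3.trans h1
  have : (∫ x in (0:ℝ)..1, h x) ≤ ∑' n, a n :=
    (ENNReal.ofReal_le_ofReal_iff hS_nonneg).1 hfinal
  exact absurd hlt (not_lt.2 this)
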